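/- Under the PRP mediator and action-targeted utility, along a finite improvement path γ, if at step r author p deviates to topic k and Q_{p,k} ≤ B_k(a^r), then her utility after the deviation is at most D(k)·S_k(γ)/(W_k(γ)+1), where S_k(γ) is the maximum of B_k over profiles in γ and W_k(γ) the minimum of H_k over profiles in γ. -/

import Mathlib

open Finset

noncomputable section

/-- Highest quality of a document on topic `k` under profile `a`:
`B_k(a) = max_j Q_{j,k} · 1[a_j = k]` (with value `0` when the max is over an empty set). -/
def hiQ {n m : ℕ} (Q : Fin n → Fin m → ℝ) (k : Fin m) (a : Fin n → Fin m) : ℝ :=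
  Finset.univ.fold max 0 (fun j => if a j = k then Q j k else 0)

/-- Number of authors writing on topic `k` with the highest quality `B_k(a)`. -/
def numTop {n m : ℕ} (Q : Fin n → Fin m → ℝ) (k : Fin m) (a : Fin n → Fin m) : ℕ :=
  (Finset.univ.filter (fun j => a j = k ∧ Q j k = hiQ Q k a)).card

/-- The PRP mediator: first-rank probability of author `j` on topic `k` under profile `a`. -/
def prp {n m : ℕ} (Q : Fin n → Fin m → ℝ) (k : Fin m) (a : Fin n → Fin m) (j : Fin n) : ℝ :=
  if a j = k ∧ Q j k = hiQ Q k a then 1 / (numTop Q k a : ℝ) else 0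

/-- Exposure-targeted utility under the PRP mediator. -/
def uEx {n m : ℕ} (D : Fin m → ℝ) (Q : Fin n → Fin m → ℝ) (a : Fin n → Fin m) (j : Fin n) : ℝ :=
  D (a j) * prp Q (a j) a j

/-- Action-targeted utility under the PRP mediator. -/
def uAc {n m : ℕ} (D : Fin m → ℝ) (Q : Fin n → Fin m → ℝ) (a : Fin n → Fin m) (j : Fin n) : ℝ :=
  D (a j) * prp Q (a j) a j * Q j (a j)

/-- `b` is obtained from `a` by a unilateral deviation of author `p` strictly
increasing her utility (an improvement step). -/
def ImpStep {n m : ℕ} (u : (Fin n → Fin m) → Fin n → ℝ)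
    (a b : Fin n → Fin m) (p : Fin n) : Prop :=
  (∀ i, i ≠ p → b i = a i) ∧ b p ≠ a p ∧ u a p < u b p

/-- `γ` is an improvement path: each consecutive pair of profiles is an improvement step. -/
def IsImpPath {n m l : ℕ} (u : (Fin n → Fin m) → Fin n → ℝ)
    (γ : Fin (l + 1) → Fin n → Fin m) : Prop :=
  ∀ r : Fin l, ∃ p, ImpStep u (γ r.castSucc) (γ r.succ) p

/-- `W_k(γ)`: the minimum of `H_k` over all profiles in the finite path `γ`. -/
def minTop {n m l : ℕ} (Q : Fin n → Fin m → ℝ) (k : Fin m)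
    (γ : Fin (l + 1) → Fin n → Fin m) : ℕ :=
  Finset.univ.inf' Finset.univ_nonempty (fun r => numTop Q k (γ r))

/-- `S_k(γ)`: the maximum of `B_k` over all profiles in the finite path `γ`. -/
def maxQ {n m l : ℕ} (Q : Fin n → Fin m → ℝ) (k : Fin m)
    (γ : Fin (l + 1) → Fin n → Fin m) : ℝ :=
  Finset.univ.sup' Finset.univ_nonempty (fun r => hiQ Q k (γ r))


lemma hiQ_nonneg' {n m : ℕ} (Q : Fin n → Fin m → ℝ) (k : Fin m) (a : Fin n → Fin m) :
    0 ≤ hiQ Q k a := by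
  unfold hiQ; rw [Finset.le_fold_max]; exact Or.inl le_rfl

lemma le_hiQ' {n m : ℕ} (Q : Fin n → Fin m → ℝ) (k : Fin m) (a : Fin n → Fin m) (j : Fin n) :
    (if a j = k then Q j k else 0) ≤ hiQ Q k a := by
  unfold hiQ; rw [Finset.le_fold_max]
  exact Or.inr ⟨j, Finset.mem_univ j, le_rfl⟩

lemma hiQ_join {n m : ℕ} (Q : Fin n → Fin m → ℝ) (k : Fin m) (a b : Fin n → Fin m) (p : Fin n)
    (hoth : ∀ i, i ≠ p → b i = a i) (hbp : b p = k) (hap : a p ≠ k)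
    (hq : Q p k ≤ hiQ Q k a) : hiQ Q k b = hiQ Q k a := by
  apply le_antisymm
  · unfold hiQ
    rw [Finset.fold_max_le]
    refine ⟨hiQ_nonneg' Q k a, fun j _ => ?_⟩
    by_cases hj : j = p
    · subst hj; rw [if_pos hbp]; exact hq
    · rw [hoth j hj]; exact le_hiQ' Q k a j
  · unfold hiQ
    rw [Finset.fold_max_le]
    refine ⟨hiQ_nonneg' Q k b, fun j _ => ?_⟩
    by_cases hj : j = p
    · subst hj; simp only [hap, if_false]; exact hiQ_nonneg' Q k b
    · rw [← hoth j hj]; exact le_hiQ' Q k b j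

/-- Along a finite improvement path `γ` under PRP/action-targeted utility, if at step
`r` author `p` deviates to topic `k` and `Q_{p,k} ≤ B_k(a^r)`, then her utility after
the deviation is at most `D(k)·S_k(γ)/(W_k(γ)+1)`. -/
theorem stmt5 {n m l : ℕ} (D : Fin m → ℝ) (Q : Fin n → Fin m → ℝ)
    (hD : ∀ k, 0 ≤ D k) (hDsum : ∑ k, D k = 1)
    (hQ : ∀ j k, Q j k ∈ Set.Icc (0:ℝ) 1)
    (γ : Fin (l + 1) → Fin n → Fin m) (hγ : IsImpPath (uAc D Q) γ)
    (r : Fin l) (p : Fin n) (k : Fin m)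
    (hstep : ImpStep (uAc D Q) (γ r.castSucc) (γ r.succ) p)
    (hk : γ r.succ p = k) (hq : Q p k ≤ hiQ Q k (γ r.castSucc)) :
    uAc D Q (γ r.succ) p ≤ D k * maxQ Q k γ / (minTop Q k γ + 1) := by
  obtain ⟨hoth, hne, _⟩ := hstep
  set a := γ r.castSucc with ha
  set b := γ r.succ with hb
  have hap : a p ≠ k := fun h => hne (hk.trans h.symm)
  have hBeq : hiQ Q k b = hiQ Q k a := hiQ_join Q k a b p hoth hk hap hq
  have hRHS0 : 0 ≤ D k * maxQ Q k γ / (minTop Q k γ + 1) := by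
    apply div_nonneg
    · exact mul_nonneg (hD k) (le_trans (hiQ_nonneg' Q k a)
        (Finset.le_sup' (fun s => hiQ Q k (γ s)) (Finset.mem_univ r.castSucc)))
    · positivity
  unfold uAc prp
  rw [hk]
  by_cases hc : Q p k = hiQ Q k b
  · rw [if_pos ⟨rfl, hc⟩]
    -- numTop inequality
    have hsub : insert p (Finset.univ.filter (fun j => a j = k ∧ Q j k = hiQ Q k a))
        ⊆ Finset.univ.filter (fun j => b j = k ∧ Q j k = hiQ Q k b) := by
      intro j hj
      rcases Finset.mem_insert.mp hj with h | h
      · subst h; exact Finset.mem_filter.mpr ⟨Finset.mem_univ _, hk, hc⟩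
      · obtain ⟨-, hjk, hjq⟩ := Finset.mem_filter.mp h
        have hjp : j ≠ p := fun hh => hap (hh ▸ hjk)
        exact Finset.mem_filter.mpr ⟨Finset.mem_univ _, (hoth j hjp).trans hjk,
          hjq.trans hBeq.symm⟩
    have hpnot : p ∉ Finset.univ.filter (fun j => a j = k ∧ Q j k = hiQ Q k a) := by
      simp [hap]
    have hcard : numTop Q k a + 1 ≤ numTop Q k b := by
      have h2 := Finset.card_le_card hsub
      rw [Finset.card_insert_of_notMem hpnot] at h2
      unfold numTop
      omega
    have hmin : minTop Q k γ ≤ numTop Q k a :=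
      Finset.inf'_le (fun s => numTop Q k (γ s)) (Finset.mem_univ r.castSucc)
    have hN : (minTop Q k γ : ℝ) + 1 ≤ (numTop Q k b : ℝ) := by
      have : minTop Q k γ + 1 ≤ numTop Q k b := le_trans (by omega) hcard
      exact_mod_cast this
    have hqS : Q p k ≤ maxQ Q k γ := by
      refine hq.trans ?_
      exact Finset.le_sup' (fun s => hiQ Q k (γ s)) (Finset.mem_univ r.castSucc)
    have heq : D k * (1 / (numTop Q k b : ℝ)) * Q p k = D k * Q p k / (numTop Q k b : ℝ) := by
      ring
    rw [heq]
    apply div_le_div₀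
    · exact mul_nonneg (hD k) (le_trans ((hQ p k).1.trans hq)
        (Finset.le_sup' (fun s => hiQ Q k (γ s)) (Finset.mem_univ r.castSucc)))
    · exact mul_le_mul_of_nonneg_left hqS (hD k)
    · positivity
    · exact hN
  · rw [if_neg (by simp [hc])]
    simpa using hRHS0
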